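/- Let (A, δ) be a commutative differential ring, (B, ∂) a differential ℚ-algebra, φ : A → B a ring homomorphism, and R ⊆ A a differential subring such that φ restricted to R is a differential ring homomorphism (i.e., φ(δ(r)) = ∂(φ(r)) for r ∈ R). Then the twisted Taylor morphism T*_φ : A → B[[t]] satisfies T*_φ(r) = φ(r) (as a constant power series) for all r ∈ R. -/

import Mathlib

/-- The twisted Taylor morphism `T*_φ(a) = Σ_α b_α t^α` with
`b_α = (1/α!) Σ_{β≤α} (−1)^{α−β} (α choose β) ∂^{α−β}(φ(δ^β(a)))`. -/
noncomputable def twistedTaylor {A B : Type*} [CommRing A] [CommRing B] [Algebra ℚ B]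
    (δ : A → A) (d : B → B) (φ : A →+* B) : A → PowerSeries B :=
  fun a => PowerSeries.mk fun α => (α.factorial : ℚ)⁻¹ •
    ∑ β ∈ Finset.range (α + 1),
      ((-1 : B) ^ (α - β) * (α.choose β : B)) * d^[α - β] (φ (δ^[β] a))

/-- If `R` is a differential subring of `A` on which `φ` is a differential ring
homomorphism, then the twisted Taylor morphism `T*_φ` agrees with `φ` on `R`
(as constant power series). -/
theorem twistedTaylor_extends_differential_restriction {A B : Type*} [CommRing A]
    [CommRing B] [Algebra ℚ B] (δ : Derivation ℤ A A) (d : Derivation ℤ B B)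
    (φ : A →+* B) (R : Subring A) (hRδ : ∀ r ∈ R, δ r ∈ R)
    (hφ : ∀ r ∈ R, φ (δ r) = d (φ r)) :
    ∀ r ∈ R, twistedTaylor (⇑δ) (⇑d) φ r = PowerSeries.C (R := B) (φ r) := by
  intro r hr
  have hmem : ∀ β, (⇑δ)^[β] r ∈ R := by
    intro β
    induction β with
    | zero => simpa
    | succ n ih => rw [Function.iterate_succ_apply']; exact hRδ _ ih
  have hcomm : ∀ β, φ ((⇑δ)^[β] r) = (⇑d)^[β] (φ r) := by
    intro β
    induction β with
    | zero => simp
    | succ n ih =>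
      rw [Function.iterate_succ_apply', Function.iterate_succ_apply',
        hφ _ (hmem n), ih]
  ext α
  rw [twistedTaylor, PowerSeries.coeff_mk, PowerSeries.coeff_C]
  have hterm : ∀ β ∈ Finset.range (α + 1),
      ((-1 : B) ^ (α - β) * (α.choose β : B)) * (⇑d)^[α - β] (φ ((⇑δ)^[β] r))
      = ((-1 : B) ^ (α - β) * (α.choose β : B)) * (⇑d)^[α] (φ r) := by
    intro β hβ
    rw [hcomm, ← Function.iterate_add_apply,
      Nat.sub_add_cancel (Finset.mem_range_succ_iff.mp hβ)]
  rw [Finset.sum_congr rfl hterm, ← Finset.sum_mul]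
  have hbin : ∑ β ∈ Finset.range (α + 1), ((-1 : B) ^ (α - β) * (α.choose β : B))
      = if α = 0 then 1 else 0 := by
    have h := add_pow (1 : B) (-1) α
    simp only [one_pow, one_mul, add_neg_cancel] at h
    rw [← h]
    rcases Nat.eq_zero_or_pos α with h0 | h0
    · simp [h0]
    · simp [zero_pow h0.ne', h0.ne']
  rw [hbin]
  split_ifs with h
  · subst h; simp
  · simp
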